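/- arXiv:2004.04111 — 2 statements merged into one kernel-verified Lean document; each statement's English description precedes it below -/
import Mathlib

section
/- Let V : ℝ³ → [0,∞) be a bounded, compactly supported probability density and, for each m ∈ ℕ, let w₁, …, w_m be independent random points in ℝ³, each distributed with density V (with respect to Lebesgue measure). Fix 0 < ν < 1/3 and L > 0, and set R_m = 1/(4πm). Then the probability of the event { min_{i≠j} |w_i − w_j| ≥ L m^ν R_m } tends to 1 as m → ∞. -/
open MeasureTheory Metric Real
open scoped ENNReal Topology

noncomputable section

abbrev E3 := EuclideanSpace ℝ (Fin 3)

/-- Pair bound: if `f, g` are independent with common law `μ`, and every ball of radius `r`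
has `μ`-measure at most `c`, then `P (dist (f ω) (g ω) < r) ≤ c`. -/
lemma pair_dist_bound {Ω : Type*} [MeasurableSpace Ω] (P : Measure Ω) [IsProbabilityMeasure P]
    (μ : Measure E3) (f g : Ω → E3) (hf : Measurable f) (hg : Measurable g)
    (hfg : ProbabilityTheory.IndepFun f g P)
    (hμf : P.map f = μ) (hμg : P.map g = μ)
    {r : ℝ} {c : ℝ≥0∞} (hball : ∀ x : E3, μ (ball x r) ≤ c) :
    P {ω | dist (f ω) (g ω) < r} ≤ c := by
  haveI : IsProbabilityMeasure μ := hμf ▸ Measure.isProbabilityMeasure_map hf.aemeasurable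
  have hmap : P.map (fun ω => (f ω, g ω)) = μ.prod μ := by
    rw [(ProbabilityTheory.indepFun_iff_map_prod_eq_prod_map_map hf.aemeasurable
      hg.aemeasurable).mp hfg, hμf, hμg]
  set s : Set (E3 × E3) := {p | dist p.1 p.2 < r} with hs_def
  have hs : MeasurableSet s :=
    (isOpen_lt (continuous_fst.dist continuous_snd) continuous_const).measurableSet
  have h1 : P {ω | dist (f ω) (g ω) < r} = (μ.prod μ) s := by
    rw [← hmap, Measure.map_apply (hf.prodMk hg) hs]
    rfl
  rw [h1, Measure.prod_apply hs]
  have h2 : ∀ x : E3, Prod.mk x ⁻¹' s = ball x r := by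
    intro x; ext y; simp [hs_def, mem_ball, dist_comm]
  calc ∫⁻ x, μ (Prod.mk x ⁻¹' s) ∂μ ≤ ∫⁻ _, c ∂μ := by
        refine lintegral_mono fun x => ?_
        rw [h2 x]; exact hball x
    _ = c := by simp

/-- Let `V` be a bounded, compactly supported probability density on `ℝ³`,
and for each `m` let `w m 0, …, w m (m-1)` be i.i.d. random points with density `V`.
With `R_m = 1/(4πm)` and `0 < ν < 1/3`, `L > 0`, the probability that all mutual distances
are at least `L m^ν R_m` tends to `1` as `m → ∞`. -/
theorem min_distance_probability_tendsto_one
    (Ω : Type*) [MeasurableSpace Ω] (P : Measure Ω) [IsProbabilityMeasure P]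
    (V : E3 → ℝ) (hVmeas : Measurable V) (hVnonneg : ∀ x, 0 ≤ V x)
    (hVbdd : ∃ C : ℝ, ∀ x, V x ≤ C) (hVsupp : HasCompactSupport V)
    (hVprob : ∫ x, V x = 1)
    (w : (m : ℕ) → Fin m → Ω → E3)
    (hmeas : ∀ m i, Measurable (w m i))
    (hlaw : ∀ m i, P.map (w m i) = volume.withDensity (fun x => ENNReal.ofReal (V x)))
    (hindep : ∀ m, ProbabilityTheory.iIndepFun (w m) P)
    (ν L : ℝ) (hν0 : 0 < ν) (hν : ν < 1 / 3) (hL : 0 < L) :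
    Filter.Tendsto
      (fun m : ℕ => P {ω | ∀ i j : Fin m, i ≠ j →
        L * (m : ℝ) ^ ν * (1 / (4 * π * m)) ≤ dist (w m i ω) (w m j ω)})
      Filter.atTop (𝓝 1) := by
  obtain ⟨C, hC⟩ := hVbdd
  set μ : Measure E3 := volume.withDensity (fun x => ENNReal.ofReal (V x)) with hμ_def
  -- radius
  set r : ℕ → ℝ := fun m => L * (m : ℝ) ^ ν * (1 / (4 * π * m)) with hr_def
  have hr_nonneg : ∀ m, 0 ≤ r m := by
    intro m
    have : (0:ℝ) ≤ 1 / (4 * π * m) := by positivity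
    have h2 : (0:ℝ) ≤ (m:ℝ) ^ ν := Real.rpow_nonneg (Nat.cast_nonneg m) ν
    positivity
  -- ball bound for μ
  have hball : ∀ (ρ : ℝ) (x : E3), μ (ball x ρ) ≤ ENNReal.ofReal C * volume (ball (0:E3) ρ) := by
    intro ρ x
    rw [hμ_def, withDensity_apply _ measurableSet_ball]
    calc ∫⁻ y in ball x ρ, ENNReal.ofReal (V y)
        ≤ ∫⁻ _ in ball x ρ, ENNReal.ofReal C :=
          lintegral_mono fun y => ENNReal.ofReal_le_ofReal (hC y)
      _ = ENNReal.ofReal C * volume (ball x ρ) := by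
          rw [setLIntegral_const, mul_comm]
      _ = ENNReal.ofReal C * volume (ball (0:E3) ρ) := by
          rw [Measure.addHaar_ball_center]
  -- the per-m bound constant
  set c : ℕ → ℝ≥0∞ := fun m => ENNReal.ofReal C * volume (ball (0:E3) (r m)) with hc_def
  -- bad event
  set bad : (m : ℕ) → Set Ω := fun m =>
    ⋃ (i : Fin m), ⋃ (j : Fin m), ⋃ (_ : i ≠ j), {ω | dist (w m i ω) (w m j ω) < r m}
    with hbad_def
  have hA_meas : ∀ m (i j : Fin m), MeasurableSet {ω | dist (w m i ω) (w m j ω) < r m} :=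
    fun m i j => measurableSet_lt ((hmeas m i).dist (hmeas m j)) measurable_const
  have hbad_meas : ∀ m, MeasurableSet (bad m) := by
    intro m
    exact MeasurableSet.iUnion fun i => MeasurableSet.iUnion fun j =>
      MeasurableSet.iUnion fun _ => hA_meas m i j
  -- union bound
  have hbad_bound : ∀ m, P (bad m) ≤ (m : ℝ≥0∞) * ((m : ℝ≥0∞) * c m) := by
    intro m
    have hsingle : ∀ (i j : Fin m),
        P (⋃ (_ : i ≠ j), {ω | dist (w m i ω) (w m j ω) < r m}) ≤ c m := by
      intro i j
      rw [Set.iUnion_eq_if]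
      by_cases hij : i = j
      · simp [hij]
      · rw [if_pos hij]
        exact pair_dist_bound P μ (w m i) (w m j) (hmeas m i) (hmeas m j)
          ((hindep m).indepFun hij) (hlaw m i) (hlaw m j) (hball (r m))
    calc P (bad m) ≤ ∑' i : Fin m, P (⋃ (j : Fin m), ⋃ (_ : i ≠ j),
          {ω | dist (w m i ω) (w m j ω) < r m}) := measure_iUnion_le _
      _ ≤ ∑' _ : Fin m, ((m : ℝ≥0∞) * c m) := by
          refine ENNReal.tsum_le_tsum fun i => ?_
          calc P (⋃ (j : Fin m), ⋃ (_ : i ≠ j), {ω | dist (w m i ω) (w m j ω) < r m})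
              ≤ ∑' j : Fin m, P (⋃ (_ : i ≠ j), {ω | dist (w m i ω) (w m j ω) < r m}) :=
                measure_iUnion_le _
            _ ≤ ∑' _ : Fin m, c m := ENNReal.tsum_le_tsum fun j => hsingle i j
            _ = (m : ℝ≥0∞) * c m := by
                simp [tsum_fintype, Finset.sum_const, nsmul_eq_mul]
      _ = (m : ℝ≥0∞) * ((m : ℝ≥0∞) * c m) := by
          simp [tsum_fintype, Finset.sum_const, nsmul_eq_mul]
  -- the bound tends to 0
  have hB_fin : volume (ball (0:E3) 1) ≠ ∞ := measure_ball_lt_top.ne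
  set D : ℝ := C * L ^ 3 / (4 * π) ^ 3 with hD_def
  have hg_eq : ∀ m : ℕ, 1 ≤ m →
      (m : ℝ≥0∞) * ((m : ℝ≥0∞) * c m)
        = ENNReal.ofReal (D * (m : ℝ) ^ (3 * ν - 1)) * volume (ball (0:E3) 1) := by
    intro m hm
    have hm0 : (0:ℝ) < (m:ℝ) := by exact_mod_cast hm
    have hC0 : 0 ≤ C := le_trans (hVnonneg 0) (hC 0)
    have hvol : volume (ball (0:E3) (r m))
        = ENNReal.ofReal ((r m) ^ 3) * volume (ball (0:E3) 1) := by
      rw [Measure.addHaar_ball volume (0:E3) (hr_nonneg m), finrank_euclideanSpace_fin]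
    have h1 : ((m:ℝ) ^ ν) ^ 3 = (m:ℝ) ^ (3 * ν) := by
      rw [← Real.rpow_natCast ((m:ℝ) ^ ν) 3, ← Real.rpow_mul hm0.le]
      norm_num [mul_comm]
    have h2 : (m:ℝ) ^ (3 * ν - 1) = (m:ℝ) ^ (3 * ν) / m := by
      rw [Real.rpow_sub hm0, Real.rpow_one]
    have halg : (m:ℝ) ^ 2 * C * (r m) ^ 3 = D * (m : ℝ) ^ (3 * ν - 1) := by
      rw [hr_def, h2, hD_def]
      have hπ : π ≠ 0 := Real.pi_ne_zero
      have hm' : (m:ℝ) ≠ 0 := hm0.ne'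
      field_simp
      rw [h1]
    show (m : ℝ≥0∞) * ((m : ℝ≥0∞) * (ENNReal.ofReal C * volume (ball (0:E3) (r m)))) = _
    rw [hvol]
    have hcast : (m : ℝ≥0∞) = ENNReal.ofReal (m : ℝ) := by simp
    have hrm3 : (0:ℝ) ≤ (r m) ^ 3 := pow_nonneg (hr_nonneg m) 3
    calc (m : ℝ≥0∞) * ((m : ℝ≥0∞) * (ENNReal.ofReal C * (ENNReal.ofReal ((r m) ^ 3)
          * volume (ball (0:E3) 1))))
        = ENNReal.ofReal ((m:ℝ) ^ 2 * C * (r m) ^ 3) * volume (ball (0:E3) 1) := by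
          rw [show ((m:ℝ) ^ 2 * C * (r m) ^ 3) = (m:ℝ) * ((m:ℝ) * (C * (r m) ^ 3)) by ring,
            ENNReal.ofReal_mul hm0.le, ENNReal.ofReal_mul hm0.le, ENNReal.ofReal_mul hC0,
            hcast]
          ring
      _ = ENNReal.ofReal (D * (m : ℝ) ^ (3 * ν - 1)) * volume (ball (0:E3) 1) := by
          rw [halg]
  have hreal : Filter.Tendsto (fun m : ℕ => D * (m : ℝ) ^ (3 * ν - 1)) Filter.atTop (𝓝 0) := by
    have h3ν : 0 < 1 - 3 * ν := by linarith
    have := (tendsto_rpow_neg_atTop h3ν).comp tendsto_natCast_atTop_atTop (α := ℕ)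
    have h' : Filter.Tendsto (fun m : ℕ => (m : ℝ) ^ (3 * ν - 1)) Filter.atTop (𝓝 0) := by
      have heq : (fun m : ℕ => (m : ℝ) ^ (3 * ν - 1))
          = (fun x : ℝ => x ^ (-(1 - 3 * ν))) ∘ (fun m : ℕ => (m : ℝ)) := by
        funext m; show _ = (m:ℝ) ^ (-(1 - 3 * ν)); congr 1; ring
      rw [heq]; exact this
    simpa using h'.const_mul D
  have hg0 : Filter.Tendsto (fun m : ℕ => (m : ℝ≥0∞) * ((m : ℝ≥0∞) * c m))
      Filter.atTop (𝓝 0) := by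
    have h1 : Filter.Tendsto
        (fun m : ℕ => ENNReal.ofReal (D * (m : ℝ) ^ (3 * ν - 1)) * volume (ball (0:E3) 1))
        Filter.atTop (𝓝 0) := by
      have h2 : Filter.Tendsto (fun m : ℕ => ENNReal.ofReal (D * (m : ℝ) ^ (3 * ν - 1)))
          Filter.atTop (𝓝 0) := by
        have := (ENNReal.continuous_ofReal.tendsto 0).comp hreal
        simpa [Function.comp_def] using this
      simpa using ENNReal.Tendsto.mul_const h2 (Or.inr hB_fin)
    refine Filter.Tendsto.congr' ?_ h1
    filter_upwards [Filter.eventually_ge_atTop 1] with m hm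
    exact (hg_eq m hm).symm
  have hbad0 : Filter.Tendsto (fun m => P (bad m)) Filter.atTop (𝓝 0) :=
    tendsto_of_tendsto_of_tendsto_of_le_of_le tendsto_const_nhds hg0
      (fun _ => zero_le) hbad_bound
  -- identify the good event as the complement of bad
  have hgood_eq : ∀ m : ℕ,
      {ω | ∀ i j : Fin m, i ≠ j →
        L * (m : ℝ) ^ ν * (1 / (4 * π * m)) ≤ dist (w m i ω) (w m j ω)} = (bad m)ᶜ := by
    intro m
    ext ω
    simp only [hbad_def, Set.mem_compl_iff, Set.mem_iUnion, Set.mem_setOf_eq, not_exists, not_lt, hr_def]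
  have hfinal : ∀ m : ℕ,
      P {ω | ∀ i j : Fin m, i ≠ j →
        L * (m : ℝ) ^ ν * (1 / (4 * π * m)) ≤ dist (w m i ω) (w m j ω)}
        = 1 - P (bad m) := by
    intro m
    rw [hgood_eq m, prob_compl_eq_one_sub (hbad_meas m)]
  simp only [hfinal]
  have : Filter.Tendsto (fun m : ℕ => 1 - P (bad m)) Filter.atTop (𝓝 (1 - 0)) :=
    ENNReal.Tendsto.sub tendsto_const_nhds hbad0 (Or.inl ENNReal.one_ne_top)
  simpa using this
end
end

section
/- There is a universal constant C such that for all m ≥ 1 and all y, z ∈ ℝ³, ∫_{B_{R_m}(y)} (Gδ^m_z(x))² dx ≤ C m^{−3} / (|z − y|² + m^{−2}). -/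
open MeasureTheory Metric Real
open scoped ENNReal Topology

noncomputable section

/-- The uniform probability measure on the sphere of radius `r` around `y` in `ℝ³`:
the 2-dimensional Hausdorff measure restricted to the sphere, normalized to total mass 1. -/
def sphereUniform (y : E3) (r : ℝ) : Measure E3 :=
  ((μH[2] : Measure E3) (sphere y r))⁻¹ • (μH[2] : Measure E3).restrict (sphere y r)

/-- The Newtonian potential `Gδ_{y,r}(x) = ∫ (4π|x−z|)⁻¹ dδ_{y,r}(z)`. -/
def spherePotential (y : E3) (r : ℝ) (x : E3) : ℝ :=
  ∫ z, (4 * π * dist x z)⁻¹ ∂(sphereUniform y r)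

/-! ### Auxiliary lemmas -/

lemma spb_tsum_half : ∑' k:ℕ, (ENNReal.ofReal (1/2))^k = 2 := by
  rw [ENNReal.tsum_geometric, ← ENNReal.ofReal_one, ← ENNReal.ofReal_sub _ (by norm_num)]
  norm_num
  rw [show ((1:ℝ)/2) = (2:ℝ)⁻¹ by norm_num, ← ENNReal.ofReal_inv_of_pos (by norm_num)]
  norm_num

lemma spb_lintegral_ball_inv_sq (w : E3) {r : ℝ} (hr : 0 < r) :
    ∫⁻ x in ball w r, ENNReal.ofReal ((dist x w ^ 2)⁻¹) ≤
      ENNReal.ofReal (8 * r) * volume (ball (0:E3) 1) := by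
  set V := volume (ball (0:E3) 1) with hV
  set A : ℕ → Set E3 := fun k =>
    closedBall w (r * (1/2)^k) \ closedBall w (r * (1/2)^(k+1)) with hA
  have hcover : ball w r ⊆ {w} ∪ ⋃ k, A k := by
    intro x hx
    rcases eq_or_ne x w with h | h
    · exact Or.inl (by simp [h])
    · have hd : 0 < dist x w := dist_pos.2 h
      have hex : ∃ k : ℕ, r * (1/2)^(k+1) < dist x w := by
        obtain ⟨k, hk⟩ := exists_pow_lt_of_lt_one (div_pos hd hr) (by norm_num : (1:ℝ)/2 < 1)
        have h2 := (lt_div_iff₀ hr).1 hk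
        refine ⟨k, ?_⟩
        rw [pow_succ]
        nlinarith [pow_pos (by norm_num : (0:ℝ) < 1/2) k]
      refine Or.inr (Set.mem_iUnion.2 ⟨Nat.find hex,
        ⟨?_, fun hc => absurd (Nat.find_spec hex) (not_lt.2 (mem_closedBall.1 hc))⟩⟩)
      rw [mem_closedBall]
      rcases Nat.eq_zero_or_pos (Nat.find hex) with h0 | hpos
      · rw [h0]; simpa using (mem_ball.1 hx).le
      · have hmin := Nat.find_min hex (show Nat.find hex - 1 < Nat.find hex by omega)
        rw [show Nat.find hex - 1 + 1 = Nat.find hex by omega] at hmin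
        exact not_lt.1 hmin
  have hAk : ∀ k : ℕ, ∫⁻ x in A k, ENNReal.ofReal ((dist x w ^ 2)⁻¹) ≤
      ENNReal.ofReal (4 * r * (1/2)^k) * V := by
    intro k
    have hrk : 0 < r * (1/2)^(k+1) := by positivity
    have hbd : ∀ x ∈ A k, ENNReal.ofReal ((dist x w ^ 2)⁻¹) ≤
        ENNReal.ofReal (((r * (1/2)^(k+1))^2)⁻¹) := by
      intro x hxA
      apply ENNReal.ofReal_le_ofReal
      have h1 : r * (1/2)^(k+1) ≤ dist x w := by
        by_contra hcon
        exact hxA.2 (mem_closedBall.2 (le_of_lt (not_le.1 hcon)))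
      have h2 : 0 < dist x w := lt_of_lt_of_le hrk h1
      apply inv_anti₀ (by positivity)
      nlinarith
    calc ∫⁻ x in A k, ENNReal.ofReal ((dist x w ^ 2)⁻¹)
        ≤ ∫⁻ _ in A k, ENNReal.ofReal (((r * (1/2)^(k+1))^2)⁻¹) :=
          setLIntegral_mono (by fun_prop) hbd
      _ = ENNReal.ofReal (((r * (1/2)^(k+1))^2)⁻¹) * volume (A k) := setLIntegral_const _ _
      _ ≤ ENNReal.ofReal (((r * (1/2)^(k+1))^2)⁻¹) * volume (closedBall w (r * (1/2)^k)) := by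
          gcongr; exact Set.diff_subset
      _ = ENNReal.ofReal (((r * (1/2)^(k+1))^2)⁻¹) * (ENNReal.ofReal ((r * (1/2)^k) ^ 3) * V) := by
          rw [MeasureTheory.Measure.addHaar_closedBall _ _ (by positivity),
            finrank_euclideanSpace_fin]
      _ = ENNReal.ofReal (((r * (1/2)^(k+1))^2)⁻¹ * (r * (1/2)^k) ^ 3) * V := by
          rw [← mul_assoc, ← ENNReal.ofReal_mul (by positivity)]
      _ = ENNReal.ofReal (4 * r * (1/2)^k) * V := by
          congr 2
          field_simp
          ring
  calc ∫⁻ x in ball w r, ENNReal.ofReal ((dist x w ^ 2)⁻¹)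
      ≤ ∫⁻ x in {w} ∪ ⋃ k, A k, ENNReal.ofReal ((dist x w ^ 2)⁻¹) :=
        lintegral_mono_set hcover
    _ ≤ (∫⁻ x in ({w}:Set E3), ENNReal.ofReal ((dist x w ^ 2)⁻¹)) +
        ∫⁻ x in ⋃ k, A k, ENNReal.ofReal ((dist x w ^ 2)⁻¹) := lintegral_union_le _ _ _
    _ ≤ 0 + ∑' k, ∫⁻ x in A k, ENNReal.ofReal ((dist x w ^ 2)⁻¹) := by
        gcongr
        · exact le_of_eq (setLIntegral_measure_zero _ _ (measure_singleton w))
        · exact lintegral_iUnion_le _ _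
    _ ≤ 0 + ∑' k, ENNReal.ofReal (4 * r * (1/2)^k) * V := by gcongr with k; exact hAk k
    _ = ENNReal.ofReal (8 * r) * V := by
        rw [zero_add]
        have h3 : ∀ k:ℕ, ENNReal.ofReal (4 * r * (1/2)^k) * V =
            (ENNReal.ofReal (4 * r) * V) * (ENNReal.ofReal (1/2))^k := by
          intro k
          rw [ENNReal.ofReal_mul (by positivity), ← ENNReal.ofReal_pow (by norm_num)]
          ring
        simp_rw [h3]
        rw [ENNReal.tsum_mul_left, spb_tsum_half]
        have h4 : ENNReal.ofReal (8*r) = ENNReal.ofReal (4*r) * 2 := by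
          rw [show (8:ℝ)*r = (4*r)*2 by ring, ENNReal.ofReal_mul (by positivity),
            ENNReal.ofReal_ofNat]
        rw [h4]; ring

lemma spb_key_bound {m : ℕ} (hm : 1 ≤ m) (y z w : E3)
    (hw : w ∈ sphere z (1 / (4 * π * m))) :
    ∫⁻ x in ball y (1 / (4 * π * m)), ENNReal.ofReal ((dist x w ^ 2)⁻¹) ≤
      ENNReal.ofReal (10^6 * (1 + π^2) * (1 / (4 * π * m))^3 /
        (dist z y ^ 2 + ((m : ℝ)^2)⁻¹)) * volume (ball (0:E3) 1) := by
  have hπ : 0 < π := pi_pos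
  have hm' : (1:ℝ) ≤ (m:ℝ) := by exact_mod_cast hm
  have hm0 : (0:ℝ) < (m:ℝ) := by linarith
  set R : ℝ := 1 / (4 * π * m) with hR
  have hR0 : 0 < R := by positivity
  set d : ℝ := dist z y with hd
  have hd0 : 0 ≤ d := dist_nonneg
  have hinv : ((m:ℝ))⁻¹ = 4 * π * R := by
    rw [hR]; field_simp
  have hinv2 : ((m:ℝ)^2)⁻¹ = (4*π*R)^2 := by
    rw [← hinv]; rw [inv_pow]
  have hden : 0 < d ^ 2 + ((m : ℝ)^2)⁻¹ := by positivity
  have hzw : dist z w = R := by rw [dist_comm]; exact mem_sphere.1 hw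
  rcases le_or_gt d (4*R) with h1 | h1
  · -- near case
    have hsub : ball y R ⊆ ball w (6*R) := by
      intro x hx
      have hxy : dist x y < R := mem_ball.1 hx
      have htri : dist x w ≤ dist x y + (dist y z + dist z w) :=
        le_trans (dist_triangle x y w) (by gcongr; exact dist_triangle y z w)
      rw [mem_ball]
      have hyz : dist y z = d := by rw [hd, dist_comm]
      rw [hzw, hyz] at htri
      linarith
    calc ∫⁻ x in ball y R, ENNReal.ofReal ((dist x w ^ 2)⁻¹)
        ≤ ∫⁻ x in ball w (6*R), ENNReal.ofReal ((dist x w ^ 2)⁻¹) :=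
          lintegral_mono_set hsub
      _ ≤ ENNReal.ofReal (8 * (6*R)) * volume (ball (0:E3) 1) :=
          spb_lintegral_ball_inv_sq w (by positivity)
      _ ≤ ENNReal.ofReal (10^6 * (1 + π^2) * R^3 / (d ^ 2 + ((m : ℝ)^2)⁻¹)) *
            volume (ball (0:E3) 1) := by
          gcongr
          rw [le_div_iff₀ hden, hinv2]
          have hdle : d^2 ≤ 16*R^2 := by nlinarith
          nlinarith [hdle, hR0, mul_nonneg (sq_nonneg π) (pow_pos hR0 3).le,
            mul_le_mul_of_nonneg_left hdle hR0.le]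
  · -- far case
    have hbd : ∀ x ∈ ball y R, ENNReal.ofReal ((dist x w ^ 2)⁻¹) ≤
        ENNReal.ofReal (4 / d^2) := by
      intro x hx
      have hxy : dist x y < R := mem_ball.1 hx
      have htri : d ≤ R + dist w x + dist x y := by
        calc d = dist z y := hd
          _ ≤ dist z w + dist w y := dist_triangle z w y
          _ ≤ dist z w + (dist w x + dist x y) := by gcongr; exact dist_triangle w x y
          _ = R + dist w x + dist x y := by rw [hzw]; ring
      have hwx : d / 2 < dist x w := by rw [dist_comm]; linarith
      have hd2 : 0 < d := by linarith
      apply ENNReal.ofReal_le_ofReal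
      have hsq : (d/2)^2 ≤ dist x w ^2 := by nlinarith
      calc (dist x w ^ 2)⁻¹ ≤ ((d/2)^2)⁻¹ := inv_anti₀ (by positivity) hsq
        _ = 4 / d^2 := by field_simp; ring
    have hd2 : 0 < d := by nlinarith
    calc ∫⁻ x in ball y R, ENNReal.ofReal ((dist x w ^ 2)⁻¹)
        ≤ ∫⁻ _ in ball y R, ENNReal.ofReal (4 / d^2) :=
          setLIntegral_mono (by fun_prop) hbd
      _ = ENNReal.ofReal (4 / d^2) * volume (ball y R) := setLIntegral_const _ _
      _ = ENNReal.ofReal (4 / d^2) * (ENNReal.ofReal (R ^ 3) * volume (ball (0:E3) 1)) := by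
          rw [MeasureTheory.Measure.addHaar_ball _ _ hR0.le, finrank_euclideanSpace_fin]
      _ = ENNReal.ofReal (4 / d^2 * R^3) * volume (ball (0:E3) 1) := by
          rw [← mul_assoc, ← ENNReal.ofReal_mul (by positivity)]
      _ ≤ ENNReal.ofReal (10^6 * (1 + π^2) * R^3 / (d ^ 2 + ((m : ℝ)^2)⁻¹)) *
            volume (ball (0:E3) 1) := by
          gcongr
          rw [div_mul_eq_mul_div, div_le_div_iff₀ (by positivity) hden]
          have h16 : ((m:ℝ)^2)⁻¹ ≤ π^2 * d^2 := by
            rw [hinv2]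
            have h162 : 16*R^2 ≤ d^2 := by nlinarith
            nlinarith [mul_le_mul_of_nonneg_left h162 (sq_nonneg π)]
          nlinarith [pow_pos hR0 3, mul_nonneg (pow_pos hR0 3).le (sq_nonneg d),
            mul_le_mul_of_nonneg_left h16 (pow_pos hR0 3).le,
            mul_nonneg (mul_nonneg (sq_nonneg π) (pow_pos hR0 3).le) (sq_nonneg d)]

lemma sphereUniform_univ_le (y : E3) (r : ℝ) : sphereUniform y r Set.univ ≤ 1 := by
  rw [sphereUniform, Measure.smul_apply, Measure.restrict_apply_univ, smul_eq_mul]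
  exact ENNReal.inv_mul_le_one _

instance sphereUniform_finite (y : E3) (r : ℝ) : IsFiniteMeasure (sphereUniform y r) :=
  ⟨lt_of_le_of_lt (sphereUniform_univ_le y r) ENNReal.one_lt_top⟩

lemma sphereUniform_ae_mem (y : E3) (r : ℝ) :
    ∀ᵐ w ∂(sphereUniform y r), w ∈ sphere y r := by
  rw [sphereUniform]
  exact Measure.ae_smul_measure (ae_restrict_mem isClosed_sphere.measurableSet) _

lemma spb_meas_g : Measurable (fun p : E3 × E3 => ENNReal.ofReal ((4 * π * dist p.1 p.2)⁻¹)) :=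
  ((measurable_dist.const_mul (4 * π)).inv).ennreal_ofReal

lemma spb_meas_gx (x : E3) : Measurable (fun w : E3 => ENNReal.ofReal ((4 * π * dist x w)⁻¹)) :=
  (((measurable_dist.comp (measurable_const.prodMk measurable_id)).const_mul
    (4 * π)).inv).ennreal_ofReal

lemma spb_meas_fx (x : E3) : Measurable (fun w : E3 => (4 * π * dist x w)⁻¹) :=
  ((measurable_dist.comp (measurable_const.prodMk measurable_id)).const_mul (4 * π)).inv

/-- Cauchy–Schwarz step. -/
lemma spb_cs_step (δ : Measure E3) (hδ : δ Set.univ ≤ 1) (x : E3) :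
    (∫⁻ w, ENNReal.ofReal ((4 * π * dist x w)⁻¹) ∂δ) ^ 2 ≤
      ∫⁻ w, (ENNReal.ofReal ((4 * π * dist x w)⁻¹)) ^ 2 ∂δ := by
  set f : E3 → ℝ≥0∞ := fun w => ENNReal.ofReal ((4 * π * dist x w)⁻¹) with hf
  have h2 : (2:ℝ).HolderConjugate 2 := Real.holderConjugate_iff.mpr ⟨one_lt_two, by norm_num⟩
  have hcs := ENNReal.lintegral_mul_le_Lp_mul_Lq δ h2 (spb_meas_gx x).aemeasurable
    aemeasurable_const (g := fun _ => (1:ℝ≥0∞))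
  simp only [Pi.mul_apply, mul_one, ENNReal.one_rpow, lintegral_const, one_mul] at hcs
  have hδ' : (δ Set.univ) ^ ((1:ℝ)/2) ≤ 1 := by
    calc (δ Set.univ) ^ ((1:ℝ)/2) ≤ (1:ℝ≥0∞) ^ ((1:ℝ)/2) :=
          ENNReal.rpow_le_rpow hδ (by norm_num)
      _ = 1 := ENNReal.one_rpow _
  have hL : ∫⁻ w, f w ∂δ ≤ (∫⁻ w, f w ^ (2:ℝ) ∂δ) ^ ((1:ℝ)/2) := by
    calc ∫⁻ w, f w ∂δ ≤ (∫⁻ w, f w ^ (2:ℝ) ∂δ) ^ ((1:ℝ)/2) * (δ Set.univ) ^ ((1:ℝ)/2) := hcs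
      _ ≤ (∫⁻ w, f w ^ (2:ℝ) ∂δ) ^ ((1:ℝ)/2) * 1 := by gcongr
      _ = (∫⁻ w, f w ^ (2:ℝ) ∂δ) ^ ((1:ℝ)/2) := mul_one _
  calc (∫⁻ w, f w ∂δ) ^ 2 ≤ ((∫⁻ w, f w ^ (2:ℝ) ∂δ) ^ ((1:ℝ)/2)) ^ 2 := by gcongr
    _ = ∫⁻ w, f w ^ 2 ∂δ := by
        rw [← ENNReal.rpow_natCast (((∫⁻ w, f w ^ (2:ℝ) ∂δ) ^ ((1:ℝ)/2))) 2,
          ← ENNReal.rpow_mul]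
        norm_num

/-- There is a universal constant `C` such that for all `m ≥ 1` and all
`y, z ∈ ℝ³`, `∫_{B_{R_m}(y)} (Gδ^m_z(x))² dx ≤ C m⁻³ / (|z−y|² + m⁻²)`, where `δ^m_z` is
the uniform probability measure on `∂B_{R_m}(z)` and `R_m = 1/(4πm)`. -/
theorem spherePotential_sq_integral_ball_bound :
    ∃ C : ℝ, ∀ m : ℕ, 1 ≤ m → ∀ y z : E3,
      ∫ x in ball y (1 / (4 * π * m)), (spherePotential z (1 / (4 * π * m)) x) ^ 2 ≤
        C * ((m : ℝ) ^ 3)⁻¹ / (dist z y ^ 2 + ((m : ℝ) ^ 2)⁻¹) := by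
  have hπ : 0 < π := pi_pos
  have hVne : volume (ball (0:E3) 1) ≠ ⊤ := measure_ball_lt_top.ne
  set v : ℝ := (volume (ball (0:E3) 1)).toReal with hv
  have hv0 : 0 ≤ v := ENNReal.toReal_nonneg
  refine ⟨10^6 * (1 + π^2) * v, ?_⟩
  intro m hm y z
  have hm' : (1:ℝ) ≤ (m:ℝ) := by exact_mod_cast hm
  have hm0 : (0:ℝ) < (m:ℝ) := by linarith
  set R : ℝ := 1 / (4 * π * m) with hR
  have hR0 : 0 < R := by positivity
  set d : ℝ := dist z y with hd
  have hd0 : 0 ≤ d := dist_nonneg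
  have hden : 0 < d ^ 2 + ((m : ℝ)^2)⁻¹ := by positivity
  set L : E3 → ℝ≥0∞ :=
    fun x => ∫⁻ w, ENNReal.ofReal ((4 * π * dist x w)⁻¹) ∂(sphereUniform z R) with hL
  have hmeasL : Measurable L :=
    Measurable.lintegral_prod_right' (f := fun p : E3 × E3 =>
      ENNReal.ofReal ((4 * π * dist p.1 p.2)⁻¹)) spb_meas_g
  have hpot : ∀ x, spherePotential z R x = (L x).toReal := by
    intro x
    rw [spherePotential, integral_eq_lintegral_of_nonneg_ae
      (Filter.Eventually.of_forall (fun w => by positivity))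
      (spb_meas_fx x).aestronglyMeasurable]
  have hbound : ∫⁻ x in ball y R, ENNReal.ofReal ((spherePotential z R x)^2) ≤
      ENNReal.ofReal (10^6 * (1 + π^2) * R^3 / (d ^ 2 + ((m : ℝ)^2)⁻¹)) *
        volume (ball (0:E3) 1) := by
    calc ∫⁻ x in ball y R, ENNReal.ofReal ((spherePotential z R x)^2)
        = ∫⁻ x in ball y R, ENNReal.ofReal (((L x)^2).toReal) := by
          apply lintegral_congr
          intro x
          rw [hpot x, ← ENNReal.toReal_pow]
      _ ≤ ∫⁻ x in ball y R, (L x)^2 :=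
          lintegral_mono (fun x => ENNReal.ofReal_toReal_le)
      _ ≤ ∫⁻ x in ball y R, ∫⁻ w, (ENNReal.ofReal ((4 * π * dist x w)⁻¹))^2
            ∂(sphereUniform z R) :=
          lintegral_mono (fun x => spb_cs_step _ (sphereUniform_univ_le z R) x)
      _ = ∫⁻ w, (∫⁻ x in ball y R, (ENNReal.ofReal ((4 * π * dist x w)⁻¹))^2)
            ∂(sphereUniform z R) :=
          lintegral_lintegral_swap (μ := volume.restrict (ball y R))
            (ν := sphereUniform z R)
            (f := fun x w => (ENNReal.ofReal ((4 * π * dist x w)⁻¹))^2)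
            (spb_meas_g.pow_const 2).aemeasurable
      _ ≤ ∫⁻ _ , (ENNReal.ofReal (10^6 * (1 + π^2) * R^3 / (d ^ 2 + ((m : ℝ)^2)⁻¹)) *
            volume (ball (0:E3) 1)) ∂(sphereUniform z R) := by
          refine lintegral_mono_ae ?_
          filter_upwards [sphereUniform_ae_mem z R] with w hw
          calc ∫⁻ x in ball y R, (ENNReal.ofReal ((4 * π * dist x w)⁻¹))^2
              ≤ ∫⁻ x in ball y R, ENNReal.ofReal ((dist x w ^ 2)⁻¹) := by
                apply lintegral_mono
                intro x
                simp only []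
                rw [← ENNReal.ofReal_pow (by positivity)]
                apply ENNReal.ofReal_le_ofReal
                rcases eq_or_lt_of_le (dist_nonneg : 0 ≤ dist x w) with h0 | h0
                · rw [← h0]; norm_num
                · have hpi : (1:ℝ) ≤ 4*π := by nlinarith [pi_gt_three]
                  calc ((4*π*dist x w)⁻¹)^2 = ((4*π*dist x w)^2)⁻¹ := by rw [inv_pow]
                    _ ≤ (dist x w ^2)⁻¹ := by
                        apply inv_anti₀ (by positivity)
                        have h41 : (1:ℝ) ≤ (4*π)^2 := by nlinarith
                        nlinarith [mul_pos h0 h0]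
            _ ≤ ENNReal.ofReal (10^6 * (1 + π^2) * R^3 / (d ^ 2 + ((m : ℝ)^2)⁻¹)) *
                  volume (ball (0:E3) 1) := spb_key_bound hm y z w hw
      _ ≤ ENNReal.ofReal (10^6 * (1 + π^2) * R^3 / (d ^ 2 + ((m : ℝ)^2)⁻¹)) *
            volume (ball (0:E3) 1) := by
          rw [lintegral_const]
          calc _ ≤ (ENNReal.ofReal (10^6 * (1 + π^2) * R^3 / (d ^ 2 + ((m : ℝ)^2)⁻¹)) *
              volume (ball (0:E3) 1)) * 1 := by
                gcongr
                exact sphereUniform_univ_le z R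
            _ = _ := mul_one _
  have hmeas_pot : AEStronglyMeasurable (fun x => (spherePotential z R x)^2)
      (volume.restrict (ball y R)) := by
    have heq : (fun x => (spherePotential z R x)^2) = fun x => ((L x).toReal)^2 :=
      funext fun x => by rw [hpot x]
    rw [heq]
    exact ((hmeasL.ennreal_toReal).pow_const 2).aestronglyMeasurable
  rw [integral_eq_lintegral_of_nonneg_ae
    (Filter.Eventually.of_forall (fun x => sq_nonneg _)) hmeas_pot]
  apply ENNReal.toReal_le_of_le_ofReal (by positivity)
  refine le_trans hbound ?_
  rw [show volume (ball (0:E3) 1) = ENNReal.ofReal v by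
      rw [hv, ENNReal.ofReal_toReal hVne],
    ← ENNReal.ofReal_mul (by positivity)]
  apply ENNReal.ofReal_le_ofReal
  have hR3 : R^3 ≤ ((m:ℝ)^3)⁻¹ := by
    have h1 : R ≤ ((m:ℝ))⁻¹ := by
      rw [hR]
      rw [div_le_iff₀ (by positivity)]
      rw [inv_mul_eq_div, le_div_iff₀ hm0]
      nlinarith [pi_gt_three]
    calc R^3 ≤ (((m:ℝ))⁻¹)^3 := pow_le_pow_left₀ hR0.le h1 3
      _ = ((m:ℝ)^3)⁻¹ := by rw [inv_pow]
  calc 10^6 * (1 + π^2) * R^3 / (d ^ 2 + ((m : ℝ)^2)⁻¹) * v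
      = 10^6 * (1 + π^2) * v * R^3 / (d ^ 2 + ((m : ℝ)^2)⁻¹) := by ring
    _ ≤ 10 ^ 6 * (1 + π ^ 2) * v * ((m:ℝ) ^ 3)⁻¹ / (d ^ 2 + ((m : ℝ) ^ 2)⁻¹) := by
        gcongr
end
end
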